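/- Let (X_i) be i.i.d. real random variables with common distribution P satisfying E|X| < ∞, and let g(p) = inf{r : P(X ≥ r) ≤ p}. Assume g(p) → ∞ as p → 0+ and g is slowly varying at 0. Then limsup_{n→∞} E[max_{1≤i≤n} X_i]/g(1/n) ≤ 1 (the upper bound E M_n ≤ g(1/n)(1+o(1)) of Proposition 3). -/

import Mathlib

open MeasureTheory ProbabilityTheory Filter Topology
open scoped ENNReal NNReal
open Set

lemma pow_sub_one_le_aux (ε : ℝ) (hε0 : 0 ≤ ε) (k : ℕ) :
    (1+ε)^(k+1) - 1 ≤ ((k:ℝ)+1) * ε * (1+ε)^k := by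
  induction k with
  | zero => simp [pow_succ]
  | succ k ih =>
    have hpos : (1:ℝ) ≤ (1+ε)^(k+1) := one_le_pow₀ (by linarith)
    have h1 : (1+ε)^(k+2) - 1 = (1+ε)*((1+ε)^(k+1) - 1) + ε := by ring
    have h2 : (1+ε)*((1+ε)^(k+1) - 1) ≤ (1+ε) * (((k:ℝ)+1) * ε * (1+ε)^k) := by
      apply mul_le_mul_of_nonneg_left ih (by linarith)
    have h3 : (1+ε) * (((k:ℝ)+1) * ε * (1+ε)^k) = ((k:ℝ)+1) * ε * (1+ε)^(k+1) := by ring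
    have h4 : ε ≤ ε * (1+ε)^(k+1) := by nlinarith
    push_cast
    nlinarith

lemma coeff_aux (ε : ℝ) (hε0 : 0 ≤ ε) (hε2 : ε ≤ 1/2) (k : ℕ) :
    ((1+ε)^(k+1) - 1) / 2^(k+1) ≤ ε * ((7/2) * (7/8)^k) := by
  have h1 := pow_sub_one_le_aux ε hε0 k
  have h2 : (1+ε)^k ≤ (3/2)^k := by
    apply pow_le_pow_left₀ (by linarith) (by linarith)
  have h3 : ((k:ℝ)+1) ≤ 7 * (7/6)^k := by
    have h := one_add_mul_le_pow (a := (1/6:ℝ)) (by norm_num) k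
    have : (1 + 1/6 : ℝ) = 7/6 := by norm_num
    rw [this] at h
    have hk : (0:ℝ) ≤ (k:ℝ) := Nat.cast_nonneg k
    nlinarith
  have hp1 : (0:ℝ) < 2^(k+1) := by positivity
  rw [div_le_iff₀ hp1]
  have key : ((k:ℝ)+1) * (3/2)^k ≤ 7 * (7/4)^k := by
    have : ((7:ℝ)/6)^k * (3/2)^k = (7/4)^k := by
      rw [← mul_pow]; norm_num
    have h32 : (0:ℝ) ≤ (3/2)^k := by positivity
    calc ((k:ℝ)+1) * (3/2)^k ≤ (7 * (7/6)^k) * (3/2)^k :=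
          mul_le_mul_of_nonneg_right h3 h32
      _ = 7 * ((7/6)^k * (3/2)^k) := by ring
      _ = 7 * (7/4)^k := by rw [this]
  have key2 : ((7:ℝ)/8)^k * 2^(k+1) = 2 * (7/4)^k := by
    have : ((7:ℝ)/8)^k * 2^k = (7/4)^k := by
      rw [← mul_pow]; norm_num
    rw [pow_succ]
    calc ((7:ℝ)/8)^k * (2^k * 2) = ((7/8)^k * 2^k) * 2 := by ring
      _ = (7/4)^k * 2 := by rw [this]
      _ = 2 * (7/4)^k := by ring
  have hεk : ((k:ℝ)+1) * ε * (1+ε)^k ≤ ε * (7 * (7/4)^k) := by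
    have hkk : (0:ℝ) ≤ ((k:ℝ)+1) := by positivity
    calc ((k:ℝ)+1) * ε * (1+ε)^k ≤ ((k:ℝ)+1) * ε * (3/2)^k := by
          apply mul_le_mul_of_nonneg_left h2 (by positivity)
      _ = ε * (((k:ℝ)+1) * (3/2)^k) := by ring
      _ ≤ ε * (7 * (7/4)^k) := mul_le_mul_of_nonneg_left key hε0
  calc (1+ε)^(k+1) - 1 ≤ ((k:ℝ)+1) * ε * (1+ε)^k := h1
    _ ≤ ε * (7 * (7/4)^k) := hεk
    _ = ε * ((7/2) * (7/8)^k) * 2^(k+1) := by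
        have hr : ε * ((7/2) * (7/8)^k) * 2^(k+1) = ε * (7/2) * ((7/8)^k * 2^(k+1)) := by ring
        rw [hr, key2]; ring

lemma cover_Ioo (q : ℝ) (hq : 0 < q) :
    Set.Ioo 0 q ⊆ ⋃ k : ℕ, Set.Ico (q / 2^(k+1)) (q / 2^k) := by
  intro u hu
  obtain ⟨hu0, huq⟩ := hu
  have hex : ∃ n : ℕ, q / 2^n ≤ u := by
    obtain ⟨m, hm⟩ := pow_unbounded_of_one_lt (q / u) (by norm_num : (1:ℝ) < 2)
    refine ⟨m, ?_⟩
    rw [div_le_iff₀ (by positivity : (0:ℝ) < 2^m)]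
    rw [div_lt_iff₀ hu0] at hm
    nlinarith
  classical
  let n0 := Nat.find hex
  have hn0 : q / 2^n0 ≤ u := Nat.find_spec hex
  have hn0pos : n0 ≠ 0 := by
    intro h
    rw [h] at hn0
    simp at hn0
    linarith
  obtain ⟨k, hk⟩ : ∃ k, n0 = k + 1 := ⟨n0 - 1, by omega⟩
  refine Set.mem_iUnion.mpr ⟨k, ?_, ?_⟩
  · rw [← hk]; exact hn0
  · have := Nat.find_min hex (by omega : k < n0)
    push_neg at this
    exact this

section Quantile
variable (P : Measure ℝ) [IsProbabilityMeasure P]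

/-- tail function -/
noncomputable def tailF : ℝ → ℝ := fun r => (P (Set.Ici r)).toReal

lemma tailF_antitone : Antitone (tailF P) := fun r s hrs =>
  ENNReal.toReal_mono (measure_ne_top _ _) (measure_mono (Set.Ici_subset_Ici.mpr hrs))

lemma tailF_nonneg (r : ℝ) : 0 ≤ tailF P r := ENNReal.toReal_nonneg

lemma tailF_exists_le {u : ℝ} (hu : 0 < u) : ∃ r, tailF P r ≤ u := by
  have h1 : Tendsto (fun n : ℕ => P (Set.Ici (n : ℝ))) atTop (𝓝 (P (⋂ n : ℕ, Set.Ici (n : ℝ)))) :=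
    tendsto_measure_iInter_atTop (fun n => (measurableSet_Ici).nullMeasurableSet)
      (fun n m hnm => Set.Ici_subset_Ici.mpr (by exact_mod_cast hnm)) ⟨0, measure_ne_top _ _⟩
  have h2 : (⋂ n : ℕ, Set.Ici ((n : ℝ))) = ∅ := by
    ext x
    simp only [Set.mem_iInter, Set.mem_Ici, Set.mem_empty_iff_false, iff_false, not_forall, not_le]
    obtain ⟨n, hn⟩ := exists_nat_gt x
    exact ⟨n, hn⟩
  rw [h2, measure_empty] at h1
  have := (ENNReal.tendsto_toReal (by simp)).comp h1
  have h3 : Tendsto (fun n : ℕ => tailF P (n : ℝ)) atTop (𝓝 0) := by simpa [tailF, Function.comp_def] using this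
  obtain ⟨n, hn⟩ := (h3.eventually_le_const hu).exists
  exact ⟨n, hn⟩

lemma tailF_exists_gt {q : ℝ} (hq : q < 1) : ∃ r, q < tailF P r := by
  have h1 : Tendsto (fun n : ℕ => P (Set.Ici (-(n : ℝ)))) atTop (𝓝 (P (⋃ n : ℕ, Set.Ici (-(n : ℝ))))) :=
    tendsto_measure_iUnion_atTop (fun n m hnm => Set.Ici_subset_Ici.mpr (by exact_mod_cast neg_le_neg (Nat.cast_le.mpr hnm)))
  have h2 : (⋃ n : ℕ, Set.Ici (-(n : ℝ))) = Set.univ := by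
    ext x
    simp only [Set.mem_iUnion, Set.mem_Ici, Set.mem_univ, iff_true]
    obtain ⟨n, hn⟩ := exists_nat_gt (-x)
    exact ⟨n, by linarith⟩
  rw [h2, measure_univ] at h1
  have := (ENNReal.tendsto_toReal (by simp)).comp h1
  have h3 : Tendsto (fun n : ℕ => tailF P (-(n : ℝ))) atTop (𝓝 1) := by simpa [tailF, Function.comp_def] using this
  obtain ⟨n, hn⟩ := (h3.eventually_const_lt hq).exists
  exact ⟨-(n : ℝ), hn⟩

end Quantile

section Quantile2
variable (P : Measure ℝ) [IsProbabilityMeasure P]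

lemma quantileSet_nonempty {u : ℝ} (hu : 0 < u) : {r : ℝ | tailF P r ≤ u}.Nonempty :=
  tailF_exists_le P hu

lemma quantileSet_bddBelow {q : ℝ} (hq : q < 1) : BddBelow {r : ℝ | tailF P r ≤ q} := by
  obtain ⟨r0, hr0⟩ := tailF_exists_gt P hq
  refine ⟨r0, fun s hs => ?_⟩
  by_contra h
  push_neg at h
  exact absurd (tailF_antitone P h.le) (by simp only [Set.mem_setOf_eq] at hs; linarith)

/-- if `r` is strictly above the quantile, the tail at `r` is at most `q` -/
lemma tailF_le_of_gt_quantile {q r : ℝ} (hq0 : 0 < q) (hq1 : q < 1)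
    (hr : sInf {r : ℝ | tailF P r ≤ q} < r) : tailF P r ≤ q := by
  obtain ⟨s, hs, hsr⟩ := exists_lt_of_csInf_lt (quantileSet_nonempty P hq0) hr
  exact le_trans (tailF_antitone P hsr.le) hs

/-- if `u < tailF r` then `r ≤ quantile u` -/
lemma le_quantile_of_lt_tailF {u r : ℝ} (hu : 0 < u) (hur : u < tailF P r) :
    r ≤ sInf {s : ℝ | tailF P s ≤ u} := by
  refine le_csInf (quantileSet_nonempty P hu) (fun s hs => ?_)
  by_contra h
  push_neg at h
  simp only [Set.mem_setOf_eq] at hs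
  have := tailF_antitone P h.le
  linarith

lemma quantile_mono {u q : ℝ} (hu : 0 < u) (huq : u ≤ q) (hq : q < 1) :
    sInf {r : ℝ | tailF P r ≤ q} ≤ sInf {r : ℝ | tailF P r ≤ u} :=
  csInf_le_csInf (quantileSet_bddBelow P hq) (quantileSet_nonempty P hu)
    (fun r hr => le_trans hr huq)

end Quantile2

section Qhat
variable (P : Measure ℝ) [IsProbabilityMeasure P]

noncomputable def qH (q : ℝ) : ℝ → ℝ :=
  fun v => sInf {r : ℝ | tailF P r ≤ min (Real.exp v) q}

noncomputable def qhat (q : ℝ) : ℝ → ℝ := fun u => qH P q (Real.log u)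

lemma qH_antitone {q : ℝ} (hq0 : 0 < q) (hq1 : q < 1) : Antitone (qH P q) := by
  intro v w hvw
  refine csInf_le_csInf ?_ ?_ ?_
  · exact quantileSet_bddBelow P (lt_of_le_of_lt (min_le_right _ _) hq1)
  · exact quantileSet_nonempty P (lt_min (Real.exp_pos _) hq0)
  · intro r hr
    exact le_trans hr (min_le_min (Real.exp_le_exp.mpr hvw) le_rfl)

lemma qhat_measurable {q : ℝ} (hq0 : 0 < q) (hq1 : q < 1) : Measurable (qhat P q) :=
  ((qH_antitone P hq0 hq1).measurable).comp Real.measurable_log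

lemma qhat_eq {q u : ℝ} (hu0 : 0 < u) (huq : u ≤ q) :
    qhat P q u = sInf {r : ℝ | tailF P r ≤ u} := by
  unfold qhat qH
  rw [Real.exp_log hu0, min_eq_left huq]

end Qhat

section TailBound
variable (P : Measure ℝ) [IsProbabilityMeasure P]

lemma tail_lintegral_bound {q : ℝ} (hq0 : 0 < q) (hq1 : q < 1) :
    (∫⁻ x, ENNReal.ofReal (max (x - sInf {r : ℝ | tailF P r ≤ q}) 0) ∂P)
      ≤ ∫⁻ u in Set.Ioo 0 q, ENNReal.ofReal (qhat P q u - sInf {r : ℝ | tailF P r ≤ q}) := by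
  set a := sInf {r : ℝ | tailF P r ≤ q} with ha
  have hqm : Measurable (qhat P q) := qhat_measurable P hq0 hq1
  -- layer cake
  have h1 : (∫⁻ x, ENNReal.ofReal (max (x - a) 0) ∂P)
      = ∫⁻ t in Set.Ioi 0, P {x : ℝ | t < max (x - a) 0} := by
    refine lintegral_eq_lintegral_meas_lt P ?_ ?_
    · exact Filter.Eventually.of_forall (fun x => le_max_right _ _)
    · exact ((measurable_id.sub measurable_const).max measurable_const).aemeasurable
  rw [h1]
  -- pointwise domination
  have h2 : ∀ t ∈ Set.Ioi (0:ℝ), P {x : ℝ | t < max (x - a) 0}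
      ≤ (volume.restrict (Set.Ioo 0 q)) {u : ℝ | a + t ≤ qhat P q u} := by
    intro t ht
    simp only [Set.mem_Ioi] at ht
    have hset : {x : ℝ | t < max (x - a) 0} = Set.Ioi (a + t) := by
      ext x
      simp only [Set.mem_setOf_eq, lt_max_iff, Set.mem_Ioi]
      constructor
      · rintro (h | h) <;> linarith
      · intro h; left; linarith
    have hF : tailF P (a + t) ≤ q :=
      tailF_le_of_gt_quantile P hq0 hq1 (by linarith)
    have hsub : Set.Ioo 0 (tailF P (a + t)) ⊆ {u : ℝ | a + t ≤ qhat P q u} ∩ Set.Ioo 0 q := by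
      intro u hu
      obtain ⟨hu0, hu2⟩ := hu
      have huq : u < q := lt_of_lt_of_le hu2 hF
      refine ⟨?_, hu0, huq⟩
      simp only [Set.mem_setOf_eq]
      rw [qhat_eq P hu0 huq.le]
      exact le_quantile_of_lt_tailF P hu0 hu2
    calc P {x : ℝ | t < max (x - a) 0} = P (Set.Ioi (a + t)) := by rw [hset]
      _ ≤ P (Set.Ici (a + t)) := measure_mono Set.Ioi_subset_Ici_self
      _ = ENNReal.ofReal (tailF P (a + t)) := (ENNReal.ofReal_toReal (measure_ne_top _ _)).symm
      _ = volume (Set.Ioo 0 (tailF P (a + t))) := by rw [Real.volume_Ioo, sub_zero]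
      _ ≤ (volume.restrict (Set.Ioo 0 q)) {u : ℝ | a + t ≤ qhat P q u} := by
          rw [Measure.restrict_apply (measurableSet_le measurable_const hqm)]
          exact measure_mono hsub
  have hprodset : MeasurableSet {p : ℝ × ℝ | a + p.1 ≤ qhat P q p.2} :=
    measurableSet_le (measurable_const.add measurable_fst) (hqm.comp measurable_snd)
  set ind : ℝ → ℝ → ℝ≥0∞ :=
    fun t u => Set.indicator {p : ℝ × ℝ | a + p.1 ≤ qhat P q p.2} (1 : ℝ × ℝ → ℝ≥0∞) (t, u)
    with hind
  calc ∫⁻ t in Set.Ioi 0, P {x : ℝ | t < max (x - a) 0}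
      ≤ ∫⁻ t in Set.Ioi 0, (volume.restrict (Set.Ioo 0 q)) {u : ℝ | a + t ≤ qhat P q u} :=
        setLIntegral_mono_ae' measurableSet_Ioi (Filter.Eventually.of_forall h2)
    _ = ∫⁻ t in Set.Ioi 0, ∫⁻ u in Set.Ioo 0 q, ind t u := by
        refine lintegral_congr (fun t => ?_)
        rw [← lintegral_indicator_one (measurableSet_le measurable_const hqm)]
        refine lintegral_congr (fun u => ?_)
        simp only [hind, Set.indicator_apply, Set.mem_setOf_eq, Pi.one_apply]
    _ = ∫⁻ u in Set.Ioo 0 q, ∫⁻ t in Set.Ioi 0, ind t u := by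
        exact lintegral_lintegral_swap ((measurable_one.indicator hprodset).aemeasurable)
    _ = ∫⁻ u in Set.Ioo 0 q, ENNReal.ofReal (qhat P q u - a) := by
        refine lintegral_congr (fun u => ?_)
        have hiu : ∀ t : ℝ, ind t u
            = {t : ℝ | a + t ≤ qhat P q u}.indicator (1 : ℝ → ℝ≥0∞) t := by
          intro t
          simp only [hind, Set.indicator_apply, Set.mem_setOf_eq, Pi.one_apply]
        simp_rw [hiu]
        have hms : MeasurableSet {t : ℝ | a + t ≤ qhat P q u} :=
          measurableSet_le (measurable_const.add measurable_id) measurable_const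
        rw [lintegral_indicator_one hms, Measure.restrict_apply hms]
        have : {t : ℝ | a + t ≤ qhat P q u} ∩ Set.Ioi 0 = Set.Ioc 0 (qhat P q u - a) := by
          ext t
          simp only [Set.mem_inter_iff, Set.mem_setOf_eq, Set.mem_Ioi, Set.mem_Ioc]
          constructor
          · rintro ⟨h1', h2'⟩; exact ⟨h2', by linarith⟩
          · rintro ⟨h1', h2'⟩; exact ⟨by linarith, h1'⟩
        rw [this, Real.volume_Ioc, sub_zero]

end TailBound

section Karamata
variable (P : Measure ℝ) [IsProbabilityMeasure P]

lemma karamata_bound {q ε : ℝ} (hq0 : 0 < q) (hq1 : q < 1) (hε0 : 0 < ε) (hε2 : ε ≤ 1/2)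
    (hstep : ∀ p : ℝ, 0 < p → p ≤ q →
      sInf {r : ℝ | tailF P r ≤ p / 2} ≤ (1+ε) * sInf {r : ℝ | tailF P r ≤ p})
    (ha : 0 ≤ sInf {r : ℝ | tailF P r ≤ q}) :
    ∫⁻ u in Set.Ioo 0 q, ENNReal.ofReal (qhat P q u - sInf {r : ℝ | tailF P r ≤ q})
      ≤ ENNReal.ofReal (28 * ε * sInf {r : ℝ | tailF P r ≤ q} * q) := by
  set a := sInf {r : ℝ | tailF P r ≤ q} with hadef
  set G : ℝ → ℝ := fun p => sInf {r : ℝ | tailF P r ≤ p} with hGdef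
  -- induction bound
  have hfrac : ∀ k : ℕ, 0 < q / 2^k := fun k => by positivity
  have hfracle : ∀ k : ℕ, q / 2^k ≤ q := fun k => by
    rw [div_le_iff₀ (by positivity : (0:ℝ) < 2^k)]
    nlinarith [one_le_pow₀ (by norm_num : (1:ℝ) ≤ 2) (n := k), hq0]
  have hpow : ∀ k : ℕ, G (q / 2^k) ≤ (1+ε)^k * a := by
    intro k
    induction k with
    | zero => simp [hGdef, hadef]
    | succ k ih =>
      have h1 : q / 2^(k+1) = (q / 2^k) / 2 := by rw [div_div, ← pow_succ]
      have h2 : G (q / 2^(k+1)) ≤ (1+ε) * G (q / 2^k) := by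
        rw [h1]; exact hstep (q / 2^k) (hfrac k) (hfracle k)
      calc G (q / 2^(k+1)) ≤ (1+ε) * G (q / 2^k) := h2
        _ ≤ (1+ε) * ((1+ε)^k * a) := by
            apply mul_le_mul_of_nonneg_left ih (by linarith)
        _ = (1+ε)^(k+1) * a := by ring
  -- per-piece bound
  have hterm : ∀ k : ℕ, ∫⁻ u in Set.Ico (q / 2^(k+1)) (q / 2^k), ENNReal.ofReal (qhat P q u - a)
      ≤ ENNReal.ofReal ((ε * ((7/2) * (7/8)^k)) * (a * q)) := by
    intro k
    have hbd : ∀ u ∈ Set.Ico (q / 2^(k+1)) (q / 2^k),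
        ENNReal.ofReal (qhat P q u - a) ≤ ENNReal.ofReal (G (q / 2^(k+1)) - a) := by
      intro u hu
      obtain ⟨hu1, hu2⟩ := hu
      have hu0 : 0 < u := lt_of_lt_of_le (hfrac (k+1)) hu1
      have huq : u < q := lt_of_lt_of_le hu2 (hfracle k)
      apply ENNReal.ofReal_le_ofReal
      have : qhat P q u = G u := by rw [qhat_eq P hu0 huq.le]
      rw [this]
      have := quantile_mono P (hfrac (k+1)) hu1 (lt_trans huq hq1)
      linarith
    calc ∫⁻ u in Set.Ico (q / 2^(k+1)) (q / 2^k), ENNReal.ofReal (qhat P q u - a)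
        ≤ ∫⁻ _u in Set.Ico (q / 2^(k+1)) (q / 2^k), ENNReal.ofReal (G (q / 2^(k+1)) - a) :=
          setLIntegral_mono_ae' measurableSet_Ico (Filter.Eventually.of_forall hbd)
      _ = ENNReal.ofReal (G (q / 2^(k+1)) - a) * volume (Set.Ico (q / 2^(k+1)) (q / 2^k)) :=
          setLIntegral_const _ _
      _ ≤ ENNReal.ofReal ((ε * ((7/2) * (7/8)^k)) * (a * q)) := by
          rw [Real.volume_Ico]
          have hdiff : q / 2^k - q / 2^(k+1) = q / 2^(k+1) := by
            rw [pow_succ]; field_simp; ring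
          rw [hdiff]
          rw [← ENNReal.ofReal_mul (by
            have := quantile_mono P (hfrac (k+1)) ((hfracle (k+1)).trans le_rfl) hq1
            linarith)]
          apply ENNReal.ofReal_le_ofReal
          have hGk : G (q / 2^(k+1)) - a ≤ ((1+ε)^(k+1) - 1) * a := by
            have := hpow (k+1)
            nlinarith
          have hca := coeff_aux ε hε0.le hε2 k
          have h2pos : (0:ℝ) < 2^(k+1) := by positivity
          calc (G (q / 2^(k+1)) - a) * (q / 2^(k+1))
              ≤ (((1+ε)^(k+1) - 1) * a) * (q / 2^(k+1)) := by
                apply mul_le_mul_of_nonneg_right hGk (le_of_lt (by positivity))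
            _ = (((1+ε)^(k+1) - 1) / 2^(k+1)) * (a * q) := by ring
            _ ≤ (ε * ((7/2) * (7/8)^k)) * (a * q) := by
                apply mul_le_mul_of_nonneg_right hca (by positivity)
  -- sum up
  calc ∫⁻ u in Set.Ioo 0 q, ENNReal.ofReal (qhat P q u - a)
      ≤ ∫⁻ u in ⋃ k : ℕ, Set.Ico (q / 2^(k+1)) (q / 2^k), ENNReal.ofReal (qhat P q u - a) :=
        lintegral_mono_set (cover_Ioo q hq0)
    _ ≤ ∑' k : ℕ, ∫⁻ u in Set.Ico (q / 2^(k+1)) (q / 2^k), ENNReal.ofReal (qhat P q u - a) :=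
        lintegral_iUnion_le _ _
    _ ≤ ∑' k : ℕ, ENNReal.ofReal ((ε * ((7/2) * (7/8)^k)) * (a * q)) := ENNReal.tsum_le_tsum hterm
    _ = ENNReal.ofReal (∑' k : ℕ, (ε * ((7/2) * (7/8)^k)) * (a * q)) := by
        have hgeo : Summable (fun k : ℕ => ((7:ℝ)/8)^k) :=
          summable_geometric_of_lt_one (by norm_num) (by norm_num)
        have hsummable : Summable (fun k : ℕ => (ε * ((7/2) * ((7:ℝ)/8)^k)) * (a * q)) :=
          ((hgeo.mul_left (ε * (7/2))).mul_right (a * q)).congr (fun k => by ring)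
        have hnn : ∀ k : ℕ, 0 ≤ (ε * ((7/2) * ((7:ℝ)/8)^k)) * (a * q) := fun k =>
          mul_nonneg (mul_nonneg hε0.le (mul_nonneg (by norm_num) (by positivity)))
            (mul_nonneg ha hq0.le)
        rw [ENNReal.ofReal_tsum_of_nonneg hnn hsummable]
    _ ≤ ENNReal.ofReal (28 * ε * a * q) := by
        apply ENNReal.ofReal_le_ofReal
        have hsum : ∑' k : ℕ, (ε * ((7/2) * (7/8)^k)) * (a * q)
            = (ε * (7/2) * (a * q)) * ∑' k : ℕ, ((7:ℝ)/8)^k := by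
          rw [← tsum_mul_left]
          congr 1
          ext k
          ring
        rw [hsum, tsum_geometric_of_lt_one (by norm_num) (by norm_num)]
        have : ((1:ℝ) - 7/8)⁻¹ = 8 := by norm_num
        rw [this]
        nlinarith [mul_nonneg ha hq0.le, hε0.le]

end Karamata

section ExpMax
variable {Ω : Type*} [MeasurableSpace Ω] (μ : Measure Ω) [IsProbabilityMeasure μ]
  (X : ℕ → Ω → ℝ) (hmeas : ∀ i, Measurable (X i))
  (P : Measure ℝ) [IsProbabilityMeasure P]
  (hlaw : ∀ i, μ.map (X i) = P) (hint : Integrable id P)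

include hmeas hlaw hint

lemma Xint : ∀ i, Integrable (X i) μ := by
  intro i
  have h := hint
  rw [← hlaw i] at h
  exact (integrable_map_measure aestronglyMeasurable_id (hmeas i).aemeasurable).mp h

omit hlaw hint in
lemma sup_measurable (n : ℕ) (hn : 0 < n) :
    Measurable (fun ω => ⨆ i : Fin n, X i ω) := by
  haveI : Nonempty (Fin n) := Fin.pos_iff_nonempty.mp hn
  have heq : (fun ω => ⨆ i : Fin n, X i ω)
      = Finset.univ.sup' Finset.univ_nonempty (fun i : Fin n => fun ω => X i ω) := by
    ext ω
    rw [← Finset.sup'_univ_eq_ciSup]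
    rw [Finset.sup'_apply]
  rw [heq]
  exact Finset.measurable_sup' _ (fun i _ => hmeas i)

lemma sup_integrable (n : ℕ) (hn : 0 < n) :
    Integrable (fun ω => ⨆ i : Fin n, X i ω) μ := by
  haveI : Nonempty (Fin n) := Fin.pos_iff_nonempty.mp hn
  refine Integrable.mono' (integrable_finset_sum Finset.univ
    (fun (i : Fin n) _ => (Xint μ X hmeas P hlaw hint i).abs))
    (sup_measurable X hmeas n hn).aestronglyMeasurable
    (Filter.Eventually.of_forall (fun ω => ?_))
  rw [Real.norm_eq_abs, abs_le]
  have hbdd : BddAbove (Set.range (fun i : Fin n => X i ω)) :=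
    Set.Finite.bddAbove (Set.finite_range _)
  constructor
  · refine le_trans ?_ (le_ciSup hbdd (⟨0, hn⟩ : Fin n))
    have h1 : |X ((⟨0, hn⟩ : Fin n) : ℕ) ω| ≤ ∑ i : Fin n, |X (i : ℕ) ω| :=
      Finset.single_le_sum (f := fun i : Fin n => |X (i : ℕ) ω|)
        (fun j _ => abs_nonneg _) (Finset.mem_univ (⟨0, hn⟩ : Fin n))
    have h3 := neg_abs_le (X ((⟨0, hn⟩ : Fin n) : ℕ) ω)
    linarith
  · refine ciSup_le (fun i => ?_)
    refine le_trans (le_abs_self _) ?_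
    exact Finset.single_le_sum (f := fun i : Fin n => |X (i : ℕ) ω|)
      (fun j _ => abs_nonneg _) (Finset.mem_univ i)

lemma exp_max_le (n : ℕ) (hn : 0 < n) (a : ℝ) :
    ∫ ω, (⨆ i : Fin n, X i ω) ∂μ ≤ a + n * ∫ x, max (x - a) 0 ∂P := by
  haveI : Nonempty (Fin n) := Fin.pos_iff_nonempty.mp hn
  have hXi := Xint μ X hmeas P hlaw hint
  have hφint : ∀ i : ℕ, Integrable (fun ω => max (X i ω - a) 0) μ :=
    fun i => ((hXi i).sub (integrable_const a)).pos_part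
  have hle : ∀ ω, (⨆ i : Fin n, X i ω) ≤ a + ∑ i : Fin n, max (X i ω - a) 0 := by
    intro ω
    refine ciSup_le (fun i => ?_)
    have h1 : X i ω - a ≤ max (X i ω - a) 0 := le_max_left _ _
    have h2 : max (X i ω - a) 0 ≤ ∑ j : Fin n, max (X j ω - a) 0 :=
      Finset.single_le_sum (f := fun j : Fin n => max (X (j:ℕ) ω - a) 0)
        (fun j _ => le_max_right _ _) (Finset.mem_univ i)
    linarith
  have hsumint : Integrable (fun ω => ∑ i : Fin n, max (X i ω - a) 0) μ :=
    integrable_finset_sum Finset.univ (fun (i : Fin n) _ => hφint (i : ℕ))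
  have hRint : Integrable (fun ω => a + ∑ i : Fin n, max (X i ω - a) 0) μ :=
    (integrable_const a).add hsumint
  have hmono := integral_mono (sup_integrable μ X hmeas P hlaw hint n hn) hRint hle
  have hchange : ∀ i : ℕ, ∫ ω, max (X i ω - a) 0 ∂μ = ∫ x, max (x - a) 0 ∂P := by
    intro i
    rw [← hlaw i, integral_map (hmeas i).aemeasurable]
    exact ((continuous_id.sub continuous_const).max continuous_const).aestronglyMeasurable
  rw [integral_add (integrable_const a) hsumint,
    integral_const, integral_finset_sum Finset.univ (fun (i : Fin n) _ => hφint (i : ℕ))] at hmono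
  simp only [measure_univ, probReal_univ, ENNReal.toReal_one, smul_eq_mul, one_mul] at hmono
  refine le_trans hmono ?_
  simp only [hchange]
  rw [Finset.sum_const, Finset.card_univ, Fintype.card_fin, nsmul_eq_mul]

lemma exp_max_ge (n : ℕ) (hn : 0 < n) :
    ∫ x, x ∂P ≤ ∫ ω, (⨆ i : Fin n, X i ω) ∂μ := by
  haveI : Nonempty (Fin n) := Fin.pos_iff_nonempty.mp hn
  have h0 : ∫ x, x ∂P = ∫ ω, X 0 ω ∂μ := by
    rw [← hlaw 0]
    exact integral_map (hmeas 0).aemeasurable aestronglyMeasurable_id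
  rw [h0]
  refine integral_mono (Xint μ X hmeas P hlaw hint 0)
    (sup_integrable μ X hmeas P hlaw hint n hn) (fun ω => ?_)
  have hbdd : BddAbove (Set.range (fun i : Fin n => X i ω)) :=
    Set.Finite.bddAbove (Set.finite_range _)
  exact le_ciSup hbdd (⟨0, hn⟩ : Fin n)

end ExpMax


/-- **Upper bound for the expected maximum of i.i.d. random variables** (Proposition 3).
Under the assumptions of Theorem 1, `limsup_{n → ∞} E M_n / g(1/n) ≤ 1`. -/
theorem limsup_expectation_max_iid
    {Ω : Type*} [MeasurableSpace Ω] (μ : Measure Ω) [IsProbabilityMeasure μ]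
    (X : ℕ → Ω → ℝ) (hmeas : ∀ i, Measurable (X i))
    (hindep : iIndepFun X μ)
    (P : Measure ℝ) [IsProbabilityMeasure P]
    (hlaw : ∀ i, μ.map (X i) = P)
    (hint : Integrable id P)
    (g : ℝ → ℝ)
    (hg : ∀ p : ℝ, 0 < p → p < 1 → g p = sInf {r : ℝ | (P (Set.Ici r)).toReal ≤ p})
    (hginf : Tendsto g (𝓝[>] 0) atTop)
    (hslow : ∀ c : ℝ, 0 < c → Tendsto (fun p => g (c * p) / g p) (𝓝[>] 0) (𝓝 1)) :
    Filter.limsup (fun n : ℕ => (∫ ω, (⨆ i : Fin n, X i ω) ∂μ) / g (1 / n)) atTop ≤ 1 := by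
  classical
  have hgtail : ∀ p : ℝ, 0 < p → p < 1 → g p = sInf {r : ℝ | tailF P r ≤ p} := by
    intro p h1 h2; exact hg p h1 h2
  -- the sequence 1/n tends to 0 from the right
  have htend : Tendsto (fun n : ℕ => 1/(n:ℝ)) atTop (𝓝[>] (0:ℝ)) := by
    rw [tendsto_nhdsWithin_iff]
    refine ⟨tendsto_one_div_atTop_nhds_zero_nat, ?_⟩
    filter_upwards [eventually_ge_atTop 1] with n hn
    have : (0:ℝ) < (n:ℝ) := by exact_mod_cast hn
    simp only [Set.mem_Ioi]
    positivity
  -- KEY estimate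
  have KEY : ∀ ε : ℝ, 0 < ε → ε ≤ 1/2 → ∀ᶠ n : ℕ in atTop,
      (∫ ω, (⨆ i : Fin n, X i ω) ∂μ) / g (1 / n) ≤ 1 + 28 * ε := by
    intro ε hε0 hε2
    have hev : ∀ᶠ p in 𝓝[>] (0:ℝ), g (2⁻¹ * p) / g p ≤ 1 + ε ∧ 1 ≤ g p :=
      ((hslow 2⁻¹ (by norm_num)).eventually_le_const (by linarith : (1:ℝ) < 1 + ε)).and
        (hginf.eventually_ge_atTop 1)
    obtain ⟨u, hu, hsub⟩ := mem_nhdsGT_iff_exists_Ioo_subset.mp hev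
    simp only [Set.mem_Ioi] at hu
    set q0 : ℝ := min (u/2) (1/2) with hq0def
    have hq00 : 0 < q0 := lt_min (by linarith) (by norm_num)
    have hq0half : q0 ≤ 1/2 := min_le_right _ _
    have hprops : ∀ p : ℝ, 0 < p → p ≤ q0 → g (2⁻¹ * p) / g p ≤ 1 + ε ∧ 1 ≤ g p := by
      intro p hp hpq
      refine hsub ⟨hp, ?_⟩
      have : p ≤ u/2 := hpq.trans (min_le_left _ _)
      linarith
    filter_upwards [eventually_ge_atTop 2, htend.eventually_mem self_mem_nhdsWithin,
      (tendsto_one_div_atTop_nhds_zero_nat.eventually_le_const hq00)] with n hn2 hmem hq0n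
    have hn0 : (0:ℝ) < (n:ℝ) := by
      have : (2:ℝ) ≤ (n:ℝ) := by exact_mod_cast hn2
      linarith
    set q : ℝ := 1/(n:ℝ) with hqdef
    have hq0 : 0 < q := by positivity
    have hq1 : q < 1 := by
      have : q ≤ 1/2 := hq0n.trans hq0half
      linarith
    have ha1 : 1 ≤ g q := (hprops q hq0 hq0n).2
    have hgq : g q = sInf {r : ℝ | tailF P r ≤ q} := hgtail q hq0 hq1
    -- step hypothesis for Karamata
    have hstep : ∀ p : ℝ, 0 < p → p ≤ q →
        sInf {r : ℝ | tailF P r ≤ p / 2} ≤ (1+ε) * sInf {r : ℝ | tailF P r ≤ p} := by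
      intro p hp hpq
      have hp1 : p < 1 := lt_of_le_of_lt hpq hq1
      have hp2 : 0 < p/2 := by linarith
      have hp21 : p/2 < 1 := by linarith
      rw [← hgtail p hp hp1, ← hgtail (p/2) hp2 hp21]
      obtain ⟨hd, hgp1⟩ := hprops p hp (hpq.trans hq0n)
      have hgp : 0 < g p := by linarith
      rw [div_le_iff₀ hgp] at hd
      have h2p : 2⁻¹ * p = p / 2 := by ring
      rw [h2p] at hd
      linarith
    have hanonneg : 0 ≤ sInf {r : ℝ | tailF P r ≤ q} := by rw [← hgq]; linarith
    have hJ := (tail_lintegral_bound P hq0 hq1).trans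
      (karamata_bound P hq0 hq1 hε0 hε2 hstep hanonneg)
    set a : ℝ := g q with hadef
    have hIa : ∫ x, max (x - a) 0 ∂P ≤ 28 * ε * a * q := by
      rw [hgq]
      have hcont : Continuous (fun x : ℝ => max (x - sInf {r : ℝ | tailF P r ≤ q}) 0) := by
        fun_prop
      have heq : ∫ x, max (x - sInf {r : ℝ | tailF P r ≤ q}) 0 ∂P
          = (∫⁻ x, ENNReal.ofReal (max (x - sInf {r : ℝ | tailF P r ≤ q}) 0) ∂P).toReal :=
        integral_eq_lintegral_of_nonneg_ae
          (Filter.Eventually.of_forall fun x => le_max_right _ _) hcont.aestronglyMeasurable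
      rw [heq]
      refine ENNReal.toReal_le_of_le_ofReal ?_ hJ
      have h0' : 0 ≤ sInf {r : ℝ | tailF P r ≤ q} := hanonneg
      positivity
    have hEM := exp_max_le μ X hmeas P hlaw hint n (by omega) a
    have hn28 : (n:ℝ) * (28 * ε * a * q) = 28 * ε * a := by
      rw [hqdef]
      field_simp
    have h1 : (∫ ω, (⨆ i : Fin n, X i ω) ∂μ) ≤ a * (1 + 28*ε) := by
      have h2 : (n:ℝ) * (∫ x, max (x - a) 0 ∂P) ≤ (n:ℝ) * (28 * ε * a * q) :=
        mul_le_mul_of_nonneg_left hIa hn0.le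
      rw [hn28] at h2
      have := hEM
      nlinarith
    have hga : (0:ℝ) < a := by linarith
    rw [div_le_iff₀ hga]
    nlinarith
  -- lower bound for coboundedness
  have hlowev : ∀ᶠ n : ℕ in atTop,
      -(|∫ x, x ∂P|) ≤ (∫ ω, (⨆ i : Fin n, X i ω) ∂μ) / g (1 / n) := by
    filter_upwards [eventually_ge_atTop 1, htend.eventually (hginf.eventually_ge_atTop 1)]
      with n hn1 hng
    have hn0 : 0 < n := hn1
    have hgpos : (0:ℝ) < g (1/(n:ℝ)) := by linarith
    have h5 := exp_max_ge μ X hmeas P hlaw hint n hn0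
    set m : ℝ := ∫ x, x ∂P with hm
    set I : ℝ := ∫ ω, (⨆ i : Fin n, X i ω) ∂μ with hI
    have h6 : m / g (1/(n:ℝ)) ≤ I / g (1/(n:ℝ)) :=
      div_le_div_of_nonneg_right h5 hgpos.le
    have h7 : -(|m|) ≤ m / g (1/(n:ℝ)) := by
      rw [le_div_iff₀ hgpos]
      nlinarith [neg_abs_le m, abs_nonneg m]
    exact h7.trans h6
  have hco : IsCoboundedUnder (· ≤ ·) atTop
      (fun n : ℕ => (∫ ω, (⨆ i : Fin n, X i ω) ∂μ) / g (1 / n)) :=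
    isCoboundedUnder_le_of_eventually_le atTop hlowev
  by_contra hc
  push_neg at hc
  set L := Filter.limsup (fun n : ℕ => (∫ ω, (⨆ i : Fin n, X i ω) ∂μ) / g (1 / n)) atTop with hL
  set ε : ℝ := min ((L-1)/56) (1/2) with hε
  have hε0 : 0 < ε := lt_min (by linarith) (by norm_num)
  have hε2 : ε ≤ 1/2 := min_le_right _ _
  have hle : L ≤ 1 + 28 * ε := limsup_le_of_le hco (KEY ε hε0 hε2)
  have : 28 * ε ≤ (L-1)/2 := by
    have : ε ≤ (L-1)/56 := min_le_left _ _
    linarith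
  linarith
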